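/- For every d ≥ 3, the line graph L(D_d) of the d-dragon is a core: every graph homomorphism from L(D_d) to itself is a graph isomorphism. -/

import Mathlib

open SimpleGraph

/-- The edge relation of the `d`-dragon on vertex indices `0,…,d+1`:
vertices `0,…,d` are pairwise adjacent except `0` and `d`, and vertex `d+1`
is adjacent exactly to `0` and `d`. -/
def dragonRel (d : ℕ) (u v : ℕ) : Prop :=
  (u < d + 1 ∧ v < d + 1 ∧ ¬(u = 0 ∧ v = d) ∧ ¬(u = d ∧ v = 0)) ∨
  (u = d + 1 ∧ (v = 0 ∨ v = d))

/-- The `d`-dragon `D_d`: the graph obtained from `K_{d+1}` by replacing one of its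
edges by a path on 3 vertices. -/
def dragon (d : ℕ) : SimpleGraph (Fin (d + 2)) :=
  SimpleGraph.fromRel (fun u v => dragonRel d u.val v.val)

attribute [local instance] Classical.propDecidable

namespace DragonCore

variable {d : ℕ}

lemma dragon_adj {u v : Fin (d+2)} :
    (dragon d).Adj u v ↔ u ≠ v ∧
      ((u.val ≤ d ∧ v.val ≤ d ∧ ¬(u.val = 0 ∧ v.val = d) ∧ ¬(u.val = d ∧ v.val = 0)) ∨
       (u.val = d+1 ∧ (v.val = 0 ∨ v.val = d)) ∨
       (v.val = d+1 ∧ (u.val = 0 ∨ u.val = d))) := by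
  simp only [dragon, fromRel_adj, dragonRel]
  constructor
  · rintro ⟨h1, h2⟩; exact ⟨h1, by omega⟩
  · rintro ⟨h1, h2⟩; exact ⟨h1, by omega⟩

lemma dragon_adj' {u v : Fin (d+2)} (hu : u.val ≤ d) (hv : v.val ≤ d) (hne : u.val ≠ v.val)
    (h0d : ¬(u.val = 0 ∧ v.val = d)) (hd0 : ¬(u.val = d ∧ v.val = 0)) :
    (dragon d).Adj u v := by
  rw [dragon_adj]
  exact ⟨fun h => hne (by rw [h]), Or.inl ⟨hu, hv, h0d, hd0⟩⟩

/-- vertex 0 -/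
def v0 : Fin (d+2) := ⟨0, by omega⟩
/-- vertex d -/
def vd : Fin (d+2) := ⟨d, by omega⟩
/-- vertex d+1 -/
def vx : Fin (d+2) := ⟨d+1, by omega⟩

lemma v0_val : (v0 : Fin (d+2)).val = 0 := rfl
lemma vd_val : (vd : Fin (d+2)).val = d := rfl
lemma vx_val : (vx : Fin (d+2)).val = d+1 := rfl

lemma adj_v0_vx : (dragon d).Adj v0 vx := by
  rw [dragon_adj]
  constructor
  · intro h; have := congrArg Fin.val h; simp only [v0, vx] at this; omega
  · right; right; exact ⟨rfl, Or.inl rfl⟩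

lemma adj_vd_vx : (dragon d).Adj vd vx := by
  rw [dragon_adj]
  constructor
  · intro h; have := congrArg Fin.val h; simp only [vd, vx] at this; omega
  · right; right; exact ⟨rfl, Or.inr rfl⟩

/-- the pendant edge at 0 -/
def pE : (dragon d).edgeSet := ⟨s(v0, vx), adj_v0_vx⟩
/-- the pendant edge at d -/
def qE : (dragon d).edgeSet := ⟨s(vd, vx), adj_vd_vx⟩

lemma pE_ne_qE (hd : 3 ≤ d) : (pE : (dragon d).edgeSet) ≠ qE := by
  intro h
  have := congrArg Subtype.val h
  simp only [pE, qE, Sym2.eq_iff] at this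
  rcases this with ⟨h1, -⟩ | ⟨h1, h2⟩
  · have := congrArg Fin.val h1; simp only [v0, vd] at this; omega
  · have := congrArg Fin.val h1; simp only [v0, vx] at this; omega

/-- every edge containing vertex `d+1` is `pE` or `qE`. -/
lemma pendant_edges (e : (dragon d).edgeSet) (h : (vx : Fin (d+2)) ∈ (e : Sym2 (Fin (d+2)))) :
    e = pE ∨ e = qE := by
  obtain ⟨w, hw⟩ := Sym2.mem_iff_exists.mp h
  have hadj : (dragon d).Adj vx w := by
    have := e.2; rw [hw] at this; exact this
  rw [dragon_adj] at hadj
  obtain ⟨hne, hcase⟩ := hadj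
  have hvx : (vx : Fin (d+2)).val = d+1 := rfl
  have hwv : w.val = 0 ∨ w.val = d := by omega
  rcases hwv with h0 | hdd
  · left
    apply Subtype.ext
    rw [hw]
    have : w = v0 := Fin.ext h0
    rw [this]
    exact Sym2.eq_swap
  · right
    apply Subtype.ext
    rw [hw]
    have : w = vd := Fin.ext hdd
    rw [this]
    exact Sym2.eq_swap

/-- every edge has a vertex with value ≤ d -/
lemma exists_low_vertex (e : (dragon d).edgeSet) :
    ∃ v : Fin (d+2), v.val ≤ d ∧ v ∈ (e : Sym2 (Fin (d+2))) := by
  obtain ⟨u, w, huw⟩ : ∃ u w, (e : Sym2 (Fin (d+2))) = s(u,w) := by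
    induction (e : Sym2 (Fin (d+2))) using Sym2.ind with
    | _ u w => exact ⟨u, w, rfl⟩
  have hadj : (dragon d).Adj u w := by have := e.2; rw [huw] at this; exact this
  rw [dragon_adj] at hadj
  obtain ⟨-, hc⟩ := hadj
  by_cases hu : u.val ≤ d
  · exact ⟨u, hu, by rw [huw]; exact Sym2.mem_mk_left u w⟩
  · refine ⟨w, by omega, by rw [huw]; exact Sym2.mem_mk_right u w⟩

noncomputable instance : Fintype ((dragon d).edgeSet) :=
  Set.Finite.fintype (Set.toFinite _)

/-- the star at a vertex: edges containing it -/
noncomputable def star (v : Fin (d+2)) : Finset ((dragon d).edgeSet) :=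
  Finset.univ.filter (fun e => v ∈ (e : Sym2 (Fin (d+2))))

lemma mem_star_iff {v : Fin (d+2)} {e : (dragon d).edgeSet} :
    e ∈ star v ↔ v ∈ (e : Sym2 (Fin (d+2))) := by
  simp [star]

lemma lineGraph_adj_of_star {v : Fin (d+2)} {e₁ e₂ : (dragon d).edgeSet}
    (h₁ : e₁ ∈ star v) (h₂ : e₂ ∈ star v) (hne : e₁ ≠ e₂) :
    (dragon d).lineGraph.Adj e₁ e₂ :=
  ⟨hne, ⟨v, mem_star_iff.mp h₁, mem_star_iff.mp h₂⟩⟩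

lemma star_inter {u w : Fin (d+2)} (huw : u ≠ w) {e : (dragon d).edgeSet}
    (hu : e ∈ star u) (hw : e ∈ star w) : (e : Sym2 (Fin (d+2))) = s(u, w) :=
  (Sym2.mem_and_mem_iff huw).mp ⟨mem_star_iff.mp hu, mem_star_iff.mp hw⟩

/-- the neighbor list function -/
def nb (v : Fin (d+2)) (i : ℕ) (hi : i < d) (hd : 3 ≤ d) : Fin (d+2) :=
  if v.val = 0 ∨ v.val = d then (if i = d - 1 then ⟨d+1, by omega⟩ else ⟨i+1, by omega⟩)
  else ⟨if i < v.val then i else i + 1, by split <;> omega⟩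

lemma nb_val (v : Fin (d+2)) (i : ℕ) (hi : i < d) (hd : 3 ≤ d) :
    ((nb v i hi hd).val = if v.val = 0 ∨ v.val = d then (if i = d - 1 then d+1 else i+1)
      else (if i < v.val then i else i + 1)) := by
  unfold nb
  split <;> [skip; rfl]
  split <;> rfl

lemma nb_adj (v : Fin (d+2)) (hv : v.val ≤ d) (i : ℕ) (hi : i < d) (hd : 3 ≤ d) :
    (dragon d).Adj v (nb v i hi hd) := by
  have hval := nb_val v i hi hd
  rw [dragon_adj]
  constructor
  · intro h
    rw [← h] at hval
    by_cases h0 : v.val = 0 ∨ v.val = d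
    · rw [if_pos h0] at hval
      by_cases hl : i = d - 1
      · rw [if_pos hl] at hval; omega
      · rw [if_neg hl] at hval; omega
    · rw [if_neg h0] at hval
      by_cases hl : i < v.val
      · rw [if_pos hl] at hval; omega
      · rw [if_neg hl] at hval; omega
  · by_cases h0 : v.val = 0 ∨ v.val = d
    · rw [if_pos h0] at hval
      by_cases hlast : i = d - 1
      · rw [if_pos hlast] at hval
        right; right; omega
      · rw [if_neg hlast] at hval
        left; omega
    · rw [if_neg h0] at hval
      left
      split at hval <;> omega

lemma nb_inj (v : Fin (d+2)) (hv : v.val ≤ d) (i j : ℕ) (hi : i < d) (hj : j < d)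
    (hd : 3 ≤ d) (h : nb v i hi hd = nb v j hj hd) : i = j := by
  have h' := congrArg Fin.val h
  rw [nb_val, nb_val] at h'
  split at h' <;> [skip; (split at h' <;> split at h' <;> omega)]
  split at h' <;> split at h' <;> omega

lemma nb_ne (v : Fin (d+2)) (hv : v.val ≤ d) (i : ℕ) (hi : i < d) (hd : 3 ≤ d) :
    (nb v i hi hd).val ≠ v.val := by
  have hval := nb_val v i hi hd
  by_cases h0 : v.val = 0 ∨ v.val = d
  · rw [if_pos h0] at hval
    by_cases hl : i = d - 1
    · rw [if_pos hl] at hval; omega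
    · rw [if_neg hl] at hval; omega
  · rw [if_neg h0] at hval
    by_cases hl : i < v.val
    · rw [if_pos hl] at hval; omega
    · rw [if_neg hl] at hval; omega

lemma nb_surj (v : Fin (d+2)) (hv : v.val ≤ d) (w : Fin (d+2)) (hadj : (dragon d).Adj v w)
    (hd : 3 ≤ d) : ∃ (i : ℕ) (hi : i < d), nb v i hi hd = w := by
  rw [dragon_adj] at hadj
  obtain ⟨hne, hc⟩ := hadj
  have hnev : v.val ≠ w.val := fun h => hne (Fin.ext h)
  by_cases h0 : v.val = 0 ∨ v.val = d
  · -- neighbors: 1..d-1 and d+1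
    have hw : (1 ≤ w.val ∧ w.val ≤ d - 1) ∨ w.val = d + 1 := by omega
    rcases hw with hw | hw
    · refine ⟨w.val - 1, by omega, ?_⟩
      apply Fin.ext
      rw [nb_val, if_pos h0, if_neg (by omega)]
      omega
    · refine ⟨d - 1, by omega, ?_⟩
      apply Fin.ext
      rw [nb_val, if_pos h0, if_pos rfl]
      omega
  · -- neighbors: all of 0..d except v
    have hwd : w.val ≤ d := by omega
    by_cases hlt : w.val < v.val
    · refine ⟨w.val, by omega, ?_⟩
      apply Fin.ext
      rw [nb_val, if_neg h0, if_pos hlt]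
    · refine ⟨w.val - 1, by omega, ?_⟩
      apply Fin.ext
      rw [nb_val, if_neg h0, if_neg (by omega)]
      omega

/-- the edges of the star at `v`, indexed -/
noncomputable def starEdge (v : Fin (d+2)) (hv : v.val ≤ d) (i : ℕ) (hi : i < d)
    (hd : 3 ≤ d) : (dragon d).edgeSet :=
  ⟨s(v, nb v i hi hd), nb_adj v hv i hi hd⟩

lemma star_card (v : Fin (d+2)) (hv : v.val ≤ d) (hd : 3 ≤ d) :
    (star v : Finset ((dragon d).edgeSet)).card = d := by
  apply Finset.card_eq_of_bijective (fun i hi => starEdge v hv i hi hd)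
  · -- surjective
    intro e he
    rw [mem_star_iff] at he
    obtain ⟨w, hw⟩ := Sym2.mem_iff_exists.mp he
    have hadj : (dragon d).Adj v w := by
      have := e.2; rw [hw] at this; exact this
    obtain ⟨i, hi, hnb⟩ := nb_surj v hv w hadj hd
    refine ⟨i, hi, ?_⟩
    apply Subtype.ext
    simp only [starEdge]
    rw [hw, hnb]
  · -- membership
    intro i hi
    rw [mem_star_iff]
    exact Sym2.mem_mk_left _ _
  · -- injective
    intro i j hi hj hij
    have := congrArg Subtype.val hij
    simp only [starEdge, Sym2.eq_iff] at this
    rcases this with ⟨-, h2⟩ | ⟨h1, -⟩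
    · exact nb_inj v hv i j hi hj hd h2
    · exact absurd (congrArg Fin.val h1.symm) (nb_ne v hv j hj hd)

section NoColoring

variable {d : ℕ}

/-- the low vertices are `d+1` many -/
def lowEquiv : {v : Fin (d+2) // v.val ≤ d} ≃ Fin (d+1) where
  toFun v := ⟨v.1.val, by omega⟩
  invFun i := ⟨⟨i.val, by omega⟩, Nat.lt_succ_iff.mp i.2⟩
  left_inv v := by apply Subtype.ext; apply Fin.ext; rfl
  right_inv i := by apply Fin.ext; rfl

/-- the middle vertices are `d` many -/
def midEquiv : {v : Fin (d+2) // 1 ≤ v.val ∧ v.val ≤ d} ≃ Fin d where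
  toFun v := ⟨v.1.val - 1, by have := v.2; omega⟩
  invFun i := ⟨⟨i.val + 1, by omega⟩, ⟨Nat.succ_le_succ (Nat.zero_le _), Nat.succ_le_of_lt i.2⟩⟩
  left_inv v := by
    apply Subtype.ext; apply Fin.ext
    have := v.2.1
    simp only [Fin.val_mk]
    omega
  right_inv i := by apply Fin.ext; simp


/-- a color class, avoiding a bad set of edges, as a subgraph -/
def classSub (c : (dragon d).edgeSet → Fin d) (k : Fin d)
    (bad : Set (Sym2 (Fin (d+2)))) : Subgraph (dragon d) where
  verts := {v | ∃ w, ∃ h : (dragon d).Adj v w, c ⟨s(v,w), h⟩ = k ∧ s(v,w) ∉ bad}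
  Adj u v := ∃ h : (dragon d).Adj u v, c ⟨s(u,v), h⟩ = k ∧ s(u,v) ∉ bad
  adj_sub h := h.1
  edge_vert h := ⟨_, h⟩
  symm := by
    constructor
    intro u v ⟨h, hk, hb⟩
    have hs : s(v,u) = s(u,v) := Sym2.eq_swap
    refine ⟨h.symm, ?_, by rw [hs]; exact hb⟩
    rw [show (⟨s(v,u), h.symm⟩ : (dragon d).edgeSet) = ⟨s(u,v), h⟩ from Subtype.ext hs]
    exact hk

variable (c : (dragon d).edgeSet → Fin d)
  (hc : ∀ e₁ e₂, (dragon d).lineGraph.Adj e₁ e₂ → c e₁ ≠ c e₂)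

include hc

lemma color_cover (hd : 3 ≤ d) (v : Fin (d+2)) (hv : v.val ≤ d) (k : Fin d) :
    ∃ e : (dragon d).edgeSet, v ∈ (e : Sym2 (Fin (d+2))) ∧ c e = k := by
  have himg : (star v).image c = Finset.univ := by
    apply Finset.eq_univ_of_card
    rw [Finset.card_image_of_injOn, star_card v hv hd, Fintype.card_fin]
    intro e₁ h₁ e₂ h₂ h
    by_contra hne
    exact hc e₁ e₂ (lineGraph_adj_of_star h₁ h₂ hne) h
  have : k ∈ (star v).image c := by rw [himg]; exact Finset.mem_univ k
  obtain ⟨e, he, hek⟩ := Finset.mem_image.mp this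
  exact ⟨e, mem_star_iff.mp he, hek⟩

lemma classSub_isMatching (k : Fin d) (bad : Set (Sym2 (Fin (d+2)))) :
    (classSub c k bad).IsMatching := by
  intro v hv
  obtain ⟨w, h, hk, hb⟩ := hv
  refine ⟨w, ⟨h, hk, hb⟩, ?_⟩
  intro w' ⟨h', hk', hb'⟩
  by_contra hne
  have hedne : (⟨s(v,w'), h'⟩ : (dragon d).edgeSet) ≠ ⟨s(v,w), h⟩ := by
    intro heq
    have := Subtype.mk_eq_mk.mp heq
    rw [Sym2.eq_iff] at this
    rcases this with ⟨-, h2⟩ | ⟨h1, -⟩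
    · exact hne h2
    · exact h.ne h1
  exact hc _ _ ⟨hedne, ⟨v, Sym2.mem_mk_left _ _, Sym2.mem_mk_left _ _⟩⟩ (hk'.trans hk.symm)

lemma even_dp1 (hd : 3 ≤ d) (k : Fin d) (hkp : k ≠ c pE) (hkq : k ≠ c qE) : Even (d + 1) := by
  have hM := classSub_isMatching c hc k ∅
  have hverts : (classSub c k ∅).verts = {v | v.val ≤ d} := by
    ext v
    simp only [Set.mem_setOf_eq]
    constructor
    · rintro ⟨w, h, hk, -⟩
      by_contra hgt
      have hvx : v = vx := Fin.ext (by rw [vx_val]; omega)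
      have hmem : (vx : Fin (d+2)) ∈ (⟨s(v,w), h⟩ : (dragon d).edgeSet).val := by
        rw [← hvx]; exact Sym2.mem_mk_left _ _
      rcases pendant_edges _ hmem with hp | hq
      · exact hkp (by rw [← hk, hp])
      · exact hkq (by rw [← hk, hq])
    · intro hv
      obtain ⟨e, hve, hek⟩ := color_cover c hc hd v hv k
      obtain ⟨w, hw⟩ := Sym2.mem_iff_exists.mp hve
      have h : (dragon d).Adj v w := by have := e.2; rw [hw] at this; exact this
      refine ⟨w, h, ?_, Set.notMem_empty _⟩
      rw [show (⟨s(v,w), h⟩ : (dragon d).edgeSet) = e from Subtype.ext hw.symm]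
      exact hek
  have heq := hM.even_card
  rw [Set.toFinset_card, ← Nat.card_eq_fintype_card, hverts] at heq
  have hcard : Nat.card ↥({v : Fin (d+2) | v.val ≤ d}) = d + 1 := by
    have h2 := Nat.card_congr (lowEquiv (d := d))
    rw [Nat.card_eq_fintype_card (α := Fin (d+1)), Fintype.card_fin] at h2
    exact h2
  rw [hcard] at heq
  exact heq

lemma even_d (hd : 3 ≤ d) : Even d := by
  have hM := classSub_isMatching c hc (c pE) {(pE : (dragon d).edgeSet).val}
  have hverts : (classSub c (c pE) {(pE : (dragon d).edgeSet).val}).verts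
      = {v | 1 ≤ v.val ∧ v.val ≤ d} := by
    ext v
    constructor
    · rintro ⟨w, h, hk, hb⟩
      have hnp : (⟨s(v,w), h⟩ : (dragon d).edgeSet) ≠ pE := by
        intro heq
        exact hb (by rw [show s(v,w) = (pE : (dragon d).edgeSet).val from
          congrArg Subtype.val heq]; exact Set.mem_singleton _)
      simp only [Set.mem_setOf_eq]
      constructor
      · -- v.val ≠ 0
        by_contra h0
        have hv0 : v = v0 := Fin.ext (by rw [v0_val]; omega)
        have hmem : (v0 : Fin (d+2)) ∈ s(v,w) := by rw [← hv0]; exact Sym2.mem_mk_left _ _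
        have hadjL : (dragon d).lineGraph.Adj ⟨s(v,w), h⟩ pE :=
          ⟨hnp, ⟨v0, hmem, Sym2.mem_mk_left _ _⟩⟩
        exact hc _ _ hadjL hk
      · -- v.val ≤ d
        by_contra hgt
        have hvx : v = vx := Fin.ext (by rw [vx_val]; omega)
        have hmem : (vx : Fin (d+2)) ∈ (⟨s(v,w), h⟩ : (dragon d).edgeSet).val := by
          rw [← hvx]; exact Sym2.mem_mk_left _ _
        rcases pendant_edges _ hmem with hp | hq
        · exact hnp hp
        · refine hc qE pE ⟨fun hh => pE_ne_qE hd hh.symm,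
            ⟨vx, Sym2.mem_mk_right _ _, Sym2.mem_mk_right _ _⟩⟩ ?_
          rw [← hq]; exact hk
    · rintro ⟨h1, h2⟩
      obtain ⟨e, hve, hek⟩ := color_cover c hc hd v h2 (c pE)
      
      obtain ⟨w, hw⟩ := Sym2.mem_iff_exists.mp hve
      have h : (dragon d).Adj v w := by have := e.2; rw [hw] at this; exact this
      have hepe : (⟨s(v,w), h⟩ : (dragon d).edgeSet) = e := Subtype.ext hw.symm
      refine ⟨w, h, by rw [hepe]; exact hek, ?_⟩
      intro hbad
      have : s(v,w) = (pE : (dragon d).edgeSet).val := hbad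
      have hvmem : v ∈ (pE : (dragon d).edgeSet).val := by
        rw [← this]; exact Sym2.mem_mk_left _ _
      rcases Sym2.mem_iff.mp hvmem with h0 | hx
      · rw [h0, v0_val] at h1; omega
      · rw [hx, vx_val] at h2; omega
  have heq := hM.even_card
  rw [Set.toFinset_card, ← Nat.card_eq_fintype_card, hverts] at heq
  have hcard : Nat.card ↥({v : Fin (d+2) | 1 ≤ v.val ∧ v.val ≤ d}) = d := by
    have h2 := Nat.card_congr (midEquiv (d := d))
    rw [Nat.card_eq_fintype_card (α := Fin d), Fintype.card_fin] at h2
    exact h2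
  rw [hcard] at heq
  exact heq

/-- the line graph of the dragon admits no proper `d`-coloring -/
lemma noD (hd : 3 ≤ d) : False := by
  obtain ⟨k, hk⟩ : ∃ k : Fin d, k ≠ c pE ∧ k ≠ c qE := by
    by_contra hno
    push_neg at hno
    have hsub : (Finset.univ : Finset (Fin d)) ⊆ {c pE, c qE} := by
      intro k _
      by_cases h : k = c pE
      · exact Finset.mem_insert.mpr (Or.inl h)
      · exact Finset.mem_insert.mpr (Or.inr (Finset.mem_singleton.mpr (hno k h)))
    have := Finset.card_le_card hsub
    rw [Finset.card_univ, Fintype.card_fin] at this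
    have h2 : ({c pE, c qE} : Finset (Fin d)).card ≤ 2 := Finset.card_insert_le _ _ |>.trans
      (by rw [Finset.card_singleton])
    omega
  obtain ⟨r1, hr1⟩ := even_dp1 c hc hd k hk.1 hk.2
  obtain ⟨r2, hr2⟩ := even_d c hc hd
  omega

end NoColoring

lemma adj_low {u w : Fin (d+2)} (hu : u.val ≤ d) (hw : w.val ≤ d) :
    (dragon d).Adj u w ↔
      (u.val ≠ w.val ∧ ¬(u.val = 0 ∧ w.val = d) ∧ ¬(u.val = d ∧ w.val = 0)) := by
  rw [dragon_adj]
  constructor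
  · rintro ⟨hne, hc⟩
    have hne' : u.val ≠ w.val := fun h => hne (Fin.ext h)
    refine ⟨hne', ?_, ?_⟩ <;> omega
  · rintro ⟨h1, h2, h3⟩
    exact ⟨fun heq => h1 (congrArg Fin.val heq), Or.inl ⟨hu, hw, h2, h3⟩⟩

/-- a clique of size ≥ 4 in the line graph is contained in a star -/
lemma clique_star (C : Finset ((dragon d).edgeSet))
    (hC : ∀ e₁ ∈ C, ∀ e₂ ∈ C, e₁ ≠ e₂ → (dragon d).lineGraph.Adj e₁ e₂)
    (hcard : 4 ≤ C.card) :
    ∃ v : Fin (d+2), ∀ e ∈ C, v ∈ (e : Sym2 (Fin (d+2))) := by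
  have hpos : 0 < C.card := by omega
  obtain ⟨e₁, he₁⟩ := Finset.card_pos.mp hpos
  obtain ⟨a, b, hab⟩ : ∃ a b, (e₁ : Sym2 (Fin (d+2))) = s(a,b) := by
    induction (e₁ : Sym2 (Fin (d+2))) using Sym2.ind with
    | _ x y => exact ⟨x, y, rfl⟩
  have hadj₁ : (dragon d).Adj a b := by have := e₁.2; rw [hab] at this; exact this
  have hab_ne : a ≠ b := hadj₁.ne
  by_cases hA : ∀ e ∈ C, a ∈ (e : Sym2 (Fin (d+2)))
  · exact ⟨a, hA⟩
  push_neg at hA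
  obtain ⟨e₂, he₂, hae₂⟩ := hA
  have he₁₂ : e₁ ≠ e₂ := fun h => hae₂ (h ▸ (by rw [hab]; exact Sym2.mem_mk_left a b))
  obtain ⟨-, v, hv1, hv2⟩ := lineGraph_adj_iff_exists.mp (hC e₁ he₁ e₂ he₂ he₁₂)
  have hbe₂ : b ∈ (e₂ : Sym2 (Fin (d+2))) := by
    rw [hab, Sym2.mem_iff] at hv1
    rcases hv1 with rfl | rfl
    · exact absurd hv2 hae₂
    · exact hv2
  obtain ⟨c, hc⟩ := Sym2.mem_iff_exists.mp hbe₂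
  have hadj₂ : (dragon d).Adj b c := by have := e₂.2; rw [hc] at this; exact this
  have hbc_ne : b ≠ c := hadj₂.ne
  have hca_ne : c ≠ a := fun h => hae₂ (by rw [hc, ← h]; exact Sym2.mem_mk_right b c)
  by_cases hB : ∀ e ∈ C, b ∈ (e : Sym2 (Fin (d+2)))
  · exact ⟨b, hB⟩
  push_neg at hB
  obtain ⟨e₃, he₃, hbe₃⟩ := hB
  have he₁₃ : e₁ ≠ e₃ := fun h => hbe₃ (h ▸ (by rw [hab]; exact Sym2.mem_mk_right a b))
  have he₂₃ : e₂ ≠ e₃ := fun h => hbe₃ (h ▸ hbe₂)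
  have hae₃ : a ∈ (e₃ : Sym2 (Fin (d+2))) := by
    obtain ⟨-, v', hv1', hv2'⟩ := lineGraph_adj_iff_exists.mp (hC e₁ he₁ e₃ he₃ he₁₃)
    rw [hab, Sym2.mem_iff] at hv1'
    rcases hv1' with rfl | rfl
    · exact hv2'
    · exact absurd hv2' hbe₃
  have hce₃ : c ∈ (e₃ : Sym2 (Fin (d+2))) := by
    obtain ⟨-, v', hv1', hv2'⟩ := lineGraph_adj_iff_exists.mp (hC e₂ he₂ e₃ he₃ he₂₃)
    rw [hc, Sym2.mem_iff] at hv1'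
    rcases hv1' with rfl | rfl
    · exact absurd hv2' hbe₃
    · exact hv2'
  have he₃v : (e₃ : Sym2 (Fin (d+2))) = s(a,c) :=
    (Sym2.mem_and_mem_iff (fun h => hca_ne h.symm)).mp ⟨hae₃, hce₃⟩
  -- now a fourth element gives a contradiction
  exfalso
  have h4 : (C \ {e₁, e₂, e₃}).Nonempty := by
    rw [← Finset.card_pos]
    have hle : ({e₁, e₂, e₃} : Finset ((dragon d).edgeSet)).card ≤ 3 := by
      refine (Finset.card_insert_le _ _).trans (Nat.succ_le_succ ?_)
      refine (Finset.card_insert_le _ _).trans (Nat.succ_le_succ ?_)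
      rw [Finset.card_singleton]
    have hsd := Finset.card_le_card_sdiff_add_card (s := C)
      (t := ({e₁, e₂, e₃} : Finset ((dragon d).edgeSet)))
    omega
  obtain ⟨e₄, he₄'⟩ := h4
  rw [Finset.mem_sdiff] at he₄'
  obtain ⟨he₄, he₄n⟩ := he₄'
  simp only [Finset.mem_insert, Finset.mem_singleton, not_or] at he₄n
  obtain ⟨hn₁, hn₂, hn₃⟩ := he₄n
  have mem2 : ∀ x y : Fin (d+2), x ≠ y → x ∈ (e₄ : Sym2 (Fin (d+2))) →
      y ∈ (e₄ : Sym2 (Fin (d+2))) → (e₄ : Sym2 (Fin (d+2))) = s(x,y) :=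
    fun x y hxy hx hy => (Sym2.mem_and_mem_iff hxy).mp ⟨hx, hy⟩
  have common : ∀ (e : (dragon d).edgeSet), e ∈ C → e ≠ e₄ →
      ∃ v, v ∈ (e : Sym2 (Fin (d+2))) ∧ v ∈ (e₄ : Sym2 (Fin (d+2))) := by
    intro e he hne
    obtain ⟨-, v', hv1', hv2'⟩ := lineGraph_adj_iff_exists.mp (hC e he e₄ he₄ hne)
    exact ⟨v', hv1', hv2'⟩
  obtain ⟨x₁, hx₁e, hx₁⟩ := common e₁ he₁ (fun h => hn₁ h.symm)
  obtain ⟨x₂, hx₂e, hx₂⟩ := common e₂ he₂ (fun h => hn₂ h.symm)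
  obtain ⟨x₃, hx₃e, hx₃⟩ := common e₃ he₃ (fun h => hn₃ h.symm)
  rw [hab, Sym2.mem_iff] at hx₁e
  rw [hc, Sym2.mem_iff] at hx₂e
  rw [he₃v, Sym2.mem_iff] at hx₃e
  rcases hx₁e with rfl | rfl
  · -- a ∈ e₄
    rcases hx₂e with rfl | rfl
    · -- b ∈ e₄ : e₄ = s(a,b) = e₁
      exact hn₁ (Subtype.ext ((mem2 _ _ hab_ne hx₁ hx₂).trans hab.symm))
    · -- c ∈ e₄ : e₄ = s(a,c) = e₃
      exact hn₃ (Subtype.ext ((mem2 _ _ (fun h => hca_ne h.symm) hx₁ hx₂).trans he₃v.symm))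
  · -- b ∈ e₄
    rcases hx₃e with rfl | rfl
    · -- a ∈ e₄ : e₄ = e₁
      exact hn₁ (Subtype.ext ((mem2 _ _ hab_ne hx₃ hx₁).trans hab.symm))
    · -- c ∈ e₄ : e₄ = s(b,c) = e₂
      exact hn₂ (Subtype.ext ((mem2 _ _ hbc_ne hx₁ hx₃).trans hc.symm))

lemma star_image (hd4 : 4 ≤ d) (f : (dragon d).lineGraph →g (dragon d).lineGraph)
    (v : Fin (d+2)) (hv : v.val ≤ d) :
    ∃ w : Fin (d+2), w.val ≤ d ∧ ∀ e ∈ star v, w ∈ (f e : Sym2 (Fin (d+2))) := by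
  have hd : 3 ≤ d := by omega
  have hinj : Set.InjOn f (star v) := by
    intro e₁ h₁ e₂ h₂ heq
    by_contra hne
    exact (f.map_adj (lineGraph_adj_of_star (Finset.mem_coe.mp h₁) (Finset.mem_coe.mp h₂)
      hne)).ne heq
  have hCcard : ((star v).image f).card = d :=
    (Finset.card_image_of_injOn hinj).trans (star_card v hv hd)
  have hCadj : ∀ x ∈ (star v).image f, ∀ y ∈ (star v).image f, x ≠ y →
      (dragon d).lineGraph.Adj x y := by
    intro x hx y hy hxy
    obtain ⟨e₁, he₁, rfl⟩ := Finset.mem_image.mp hx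
    obtain ⟨e₂, he₂, rfl⟩ := Finset.mem_image.mp hy
    exact f.map_adj (lineGraph_adj_of_star he₁ he₂ (fun h => hxy (congrArg f h)))
  obtain ⟨w, hw⟩ := clique_star _ hCadj (by omega)
  refine ⟨w, ?_, fun e he => hw _ (Finset.mem_image_of_mem f he)⟩
  by_contra hgt
  have hwx : w = vx := Fin.ext (by rw [vx_val]; have := w.2; omega)
  have hsub : (star v).image f ⊆ {pE, qE} := by
    intro x hx
    rcases pendant_edges x (hwx ▸ hw x hx) with h | h
    · exact Finset.mem_insert.mpr (Or.inl h)
    · exact Finset.mem_insert.mpr (Or.inr (Finset.mem_singleton.mpr h))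
  have hle := Finset.card_le_card hsub
  have h2 : ({pE, qE} : Finset ((dragon d).edgeSet)).card ≤ 2 :=
    (Finset.card_insert_le _ _).trans (by rw [Finset.card_singleton])
  omega

lemma v0_ne_vd (hd : 3 ≤ d) : (v0 : Fin (d+2)) ≠ vd := by
  intro h
  have := congrArg Fin.val h
  rw [v0_val, vd_val] at this
  omega

lemma surj_of_four (hd4 : 4 ≤ d) (f : (dragon d).lineGraph →g (dragon d).lineGraph) :
    Function.Surjective ⇑f := by
  have hd : 3 ≤ d := by omega
  have h0le : (v0 : Fin (d+2)).val ≤ d := by rw [v0_val]; omega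
  have hdle : (vd : Fin (d+2)).val ≤ d := by rw [vd_val]
  have hvxne : ∀ z : Fin (d+2), z.val ≤ d → z ≠ vx := by
    intro z hz h
    rw [h, vx_val] at hz
    omega
  have hex : ∀ v : Fin (d+2), ∃ w : Fin (d+2), v.val ≤ d →
      (w.val ≤ d ∧ ∀ e ∈ star v, w ∈ (f e : Sym2 (Fin (d+2)))) := by
    intro v
    by_cases hv : v.val ≤ d
    · obtain ⟨w, hw⟩ := star_image hd4 f v hv
      exact ⟨w, fun _ => hw⟩
    · exact ⟨v0, fun h => absurd h hv⟩
  choose σ hσ using hex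
  have hσd : ∀ v : Fin (d+2), v.val ≤ d → (σ v).val ≤ d := fun v hv => (hσ v hv).1
  have hσmem : ∀ v, v.val ≤ d → ∀ e ∈ star v, σ v ∈ (f e : Sym2 (Fin (d+2))) :=
    fun v hv => (hσ v hv).2
  have K1 : ∀ u w (hu : u.val ≤ d) (hw : w.val ≤ d) (h : (dragon d).Adj u w),
      σ u ≠ σ w → (f ⟨s(u,w), h⟩ : Sym2 (Fin (d+2))) = s(σ u, σ w) := by
    intro u w hu hw h hne
    refine (Sym2.mem_and_mem_iff hne).mp ⟨?_, ?_⟩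
    · exact hσmem u hu _ (mem_star_iff.mpr (Sym2.mem_mk_left _ _))
    · exact hσmem w hw _ (mem_star_iff.mpr (Sym2.mem_mk_right _ _))
  have K2 : ∀ t u w, t.val ≤ d → u.val ≤ d → w.val ≤ d → t ≠ u → t ≠ w → u ≠ w →
      (dragon d).Adj t u → (dragon d).Adj t w → σ u = σ w → σ t = σ u := by
    intro t u w ht hu hw htu htw huw hadj1 hadj2 hσuw
    by_contra hne
    have h1 := K1 t u ht hu hadj1 hne
    have h2 := K1 t w ht hw hadj2 (by rw [← hσuw]; exact hne)
    rw [← hσuw] at h2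
    have hedne : (⟨s(t,u), hadj1⟩ : (dragon d).edgeSet) ≠ ⟨s(t,w), hadj2⟩ := by
      intro heq
      have h' := Subtype.mk_eq_mk.mp heq
      rw [Sym2.eq_iff] at h'
      rcases h' with ⟨-, h'⟩ | ⟨h', -⟩
      · exact huw h'
      · exact htw h'
    have hL : (dragon d).lineGraph.Adj ⟨s(t,u), hadj1⟩ ⟨s(t,w), hadj2⟩ :=
      lineGraph_adj_of_star (mem_star_iff.mpr (Sym2.mem_mk_left _ _))
        (mem_star_iff.mpr (Sym2.mem_mk_left _ _)) hedne
    exact (f.map_adj hL).ne (Subtype.ext (h1.trans h2.symm))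
  by_cases hinj : ∀ u w, u.val ≤ d → w.val ≤ d → σ u = σ w → u = w
  · -- injective case : f is surjective via the induced automorphism
    have hσsurj : ∀ y : Fin (d+2), y.val ≤ d → ∃ v, v.val ≤ d ∧ σ v = y := by
      intro y hy
      set A : Finset (Fin (d+2)) := Finset.univ.filter (fun v => v.val ≤ d) with hA
      have hmapsub : A.image σ ⊆ A := by
        intro x hx
        obtain ⟨v, hv, rfl⟩ := Finset.mem_image.mp hx
        rw [hA, Finset.mem_filter] at hv ⊢
        exact ⟨Finset.mem_univ _, hσd v hv.2⟩
      have hinjA : Set.InjOn σ A := by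
        intro a ha b hb hab
        rw [Finset.mem_coe, hA, Finset.mem_filter] at ha hb
        exact hinj a b ha.2 hb.2 hab
      have himg : A.image σ = A := Finset.eq_of_subset_of_card_le hmapsub
        (le_of_eq (Finset.card_image_of_injOn hinjA).symm)
      have hyA : y ∈ A.image σ := by
        rw [himg, hA, Finset.mem_filter]
        exact ⟨Finset.mem_univ _, hy⟩
      obtain ⟨v, hv, hvy⟩ := Finset.mem_image.mp hyA
      rw [hA, Finset.mem_filter] at hv
      exact ⟨v, hv.2, hvy⟩
    obtain ⟨u₁, hu₁d, hσu₁⟩ := hσsurj v0 h0le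
    obtain ⟨w₁, hw₁d, hσw₁⟩ := hσsurj vd hdle
    have hu₁w₁ : u₁ ≠ w₁ := by
      intro h
      rw [h, hσw₁] at hσu₁
      exact v0_ne_vd hd hσu₁.symm
    have hpair : (u₁.val = 0 ∧ w₁.val = d) ∨ (u₁.val = d ∧ w₁.val = 0) := by
      by_contra hno
      have hadj : (dragon d).Adj u₁ w₁ := by
        rw [adj_low hu₁d hw₁d]
        have hne : u₁.val ≠ w₁.val := fun h => hu₁w₁ (Fin.ext h)
        constructor
        · exact hne
        · omega
      have hval := K1 u₁ w₁ hu₁d hw₁d hadj (by rw [hσu₁, hσw₁]; exact v0_ne_vd hd)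
      rw [hσu₁, hσw₁] at hval
      have hE := (f ⟨s(u₁,w₁), hadj⟩).2
      rw [hval, SimpleGraph.mem_edgeSet, adj_low h0le hdle, v0_val, vd_val] at hE
      omega
    have hval0 : ∀ z : Fin (d+2), (z.val = 0 ∨ z.val = d) →
        ((σ z).val = 0 ∧ σ z = v0) ∨ ((σ z).val = d ∧ σ z = vd) := by
      intro z hz
      rcases hpair with ⟨h1, h2⟩ | ⟨h1, h2⟩
      · rcases hz with hz | hz
        · left; have : z = u₁ := Fin.ext (by omega)
          rw [this, hσu₁]; exact ⟨v0_val, rfl⟩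
        · right; have : z = w₁ := Fin.ext (by omega)
          rw [this, hσw₁]; exact ⟨vd_val, rfl⟩
      · rcases hz with hz | hz
        · right; have : z = w₁ := Fin.ext (by omega)
          rw [this, hσw₁]; exact ⟨vd_val, rfl⟩
        · left; have : z = u₁ := Fin.ext (by omega)
          rw [this, hσu₁]; exact ⟨v0_val, rfl⟩
    intro y
    by_cases hyx : (vx : Fin (d+2)) ∈ (y : Sym2 (Fin (d+2)))
    · -- y is a pendant edge
      -- generic claim about pendant vertices
      have claim : ∀ z (hz : z.val ≤ d) (x : (dragon d).edgeSet),
          z ∈ (x : Sym2 (Fin (d+2))) → (vx : Fin (d+2)) ∈ (x : Sym2 (Fin (d+2))) →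
          ((σ z = v0 → f x = pE) ∧ (σ z = vd → f x = qE)) := by
        intro z hz x hzx hvxx
        have hfz : σ z ∈ (f x : Sym2 (Fin (d+2))) := hσmem z hz x (mem_star_iff.mpr hzx)
        constructor
        · intro hσz
          rw [hσz] at hfz
          obtain ⟨z', hz'⟩ := Sym2.mem_iff_exists.mp hfz
          have hadjz' : (dragon d).Adj v0 z' := by
            have := (f x).2; rw [hz'] at this; exact this
          by_cases hz'x : z' = vx
          · exact Subtype.ext (by rw [hz', hz'x]; rfl)
          exfalso
          have hz'd : z'.val ≤ d := by
            have := z'.2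
            have : z'.val ≠ d + 1 := fun h => hz'x (Fin.ext (by rw [vx_val]; exact h))
            omega
          have hz'mid : 1 ≤ z'.val ∧ z'.val ≤ d - 1 := by
            rw [adj_low h0le hz'd, v0_val] at hadjz'
            omega
          obtain ⟨b₁, hb₁d, hσb₁⟩ := hσsurj z' hz'd
          have hb₁mid : 1 ≤ b₁.val ∧ b₁.val ≤ d - 1 := by
            by_contra hcon
            have hb : b₁.val = 0 ∨ b₁.val = d := by omega
            rcases hval0 b₁ hb with ⟨h1, -⟩ | ⟨h1, -⟩ <;> rw [hσb₁] at h1 <;> omega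
          have hzb : z ≠ b₁ := by
            intro h
            rw [h, hσb₁] at hσz
            rw [hσz, v0_val] at hz'mid
            omega
          have hadj_zb : (dragon d).Adj z b₁ := by
            rw [adj_low hz hb₁d]
            refine ⟨fun h => hzb (Fin.ext h), by omega, by omega⟩
          have hσne : σ z ≠ σ b₁ := by
            rw [hσz, hσb₁]
            intro h
            rw [← h, v0_val] at hz'mid
            omega
          have hK := K1 z b₁ hz hb₁d hadj_zb hσne
          rw [hσz, hσb₁] at hK
          have hne_ed : (⟨s(z,b₁), hadj_zb⟩ : (dragon d).edgeSet) ≠ x := by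
            intro h
            rw [← h] at hvxx
            rw [Sym2.mem_iff] at hvxx
            rcases hvxx with h' | h'
            · rw [← h', vx_val] at hz; omega
            · rw [← h', vx_val] at hb₁d; omega
          have hL : (dragon d).lineGraph.Adj ⟨s(z,b₁), hadj_zb⟩ x :=
            ⟨hne_ed, ⟨z, Sym2.mem_mk_left _ _, hzx⟩⟩
          exact (f.map_adj hL).ne (Subtype.ext (hK.trans hz'.symm))
        · intro hσz
          rw [hσz] at hfz
          obtain ⟨z', hz'⟩ := Sym2.mem_iff_exists.mp hfz
          have hadjz' : (dragon d).Adj vd z' := by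
            have := (f x).2; rw [hz'] at this; exact this
          by_cases hz'x : z' = vx
          · exact Subtype.ext (by rw [hz', hz'x]; rfl)
          exfalso
          have hz'd : z'.val ≤ d := by
            have := z'.2
            have : z'.val ≠ d + 1 := fun h => hz'x (Fin.ext (by rw [vx_val]; exact h))
            omega
          have hz'mid : 1 ≤ z'.val ∧ z'.val ≤ d - 1 := by
            rw [adj_low hdle hz'd, vd_val] at hadjz'
            omega
          obtain ⟨b₁, hb₁d, hσb₁⟩ := hσsurj z' hz'd
          have hb₁mid : 1 ≤ b₁.val ∧ b₁.val ≤ d - 1 := by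
            by_contra hcon
            have hb : b₁.val = 0 ∨ b₁.val = d := by omega
            rcases hval0 b₁ hb with ⟨h1, -⟩ | ⟨h1, -⟩ <;> rw [hσb₁] at h1 <;> omega
          have hzb : z ≠ b₁ := by
            intro h
            rw [h, hσb₁] at hσz
            rw [hσz, vd_val] at hz'mid
            omega
          have hadj_zb : (dragon d).Adj z b₁ := by
            rw [adj_low hz hb₁d]
            refine ⟨fun h => hzb (Fin.ext h), by omega, by omega⟩
          have hσne : σ z ≠ σ b₁ := by
            rw [hσz, hσb₁]
            intro h
            rw [← h, vd_val] at hz'mid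
            omega
          have hK := K1 z b₁ hz hb₁d hadj_zb hσne
          rw [hσz, hσb₁] at hK
          have hne_ed : (⟨s(z,b₁), hadj_zb⟩ : (dragon d).edgeSet) ≠ x := by
            intro h
            rw [← h] at hvxx
            rw [Sym2.mem_iff] at hvxx
            rcases hvxx with h' | h'
            · rw [← h', vx_val] at hz; omega
            · rw [← h', vx_val] at hb₁d; omega
          have hL : (dragon d).lineGraph.Adj ⟨s(z,b₁), hadj_zb⟩ x :=
            ⟨hne_ed, ⟨z, Sym2.mem_mk_left _ _, hzx⟩⟩
          exact (f.map_adj hL).ne (Subtype.ext (hK.trans hz'.symm))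
      rcases pendant_edges y hyx with hy | hy
      · -- y = pE : use pendant edge at u₁
        rcases hpair with ⟨h1, -⟩ | ⟨h1, -⟩
        · have hu₁0 : u₁ = v0 := Fin.ext (by rw [v0_val]; omega)
          refine ⟨pE, ?_⟩
          rw [hy]
          exact (claim u₁ hu₁d pE (by rw [hu₁0]; exact Sym2.mem_mk_left _ _)
            (Sym2.mem_mk_right _ _)).1 hσu₁
        · have hu₁d' : u₁ = vd := Fin.ext (by rw [vd_val]; omega)
          refine ⟨qE, ?_⟩
          rw [hy]
          exact (claim u₁ hu₁d qE (by rw [hu₁d']; exact Sym2.mem_mk_left _ _)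
            (Sym2.mem_mk_right _ _)).1 hσu₁
      · -- y = qE : use pendant edge at w₁
        rcases hpair with ⟨-, h2⟩ | ⟨-, h2⟩
        · have hw₁d' : w₁ = vd := Fin.ext (by rw [vd_val]; omega)
          refine ⟨qE, ?_⟩
          rw [hy]
          exact (claim w₁ hw₁d qE (by rw [hw₁d']; exact Sym2.mem_mk_left _ _)
            (Sym2.mem_mk_right _ _)).2 hσw₁
        · have hw₁0 : w₁ = v0 := Fin.ext (by rw [v0_val]; omega)
          refine ⟨pE, ?_⟩
          rw [hy]
          exact (claim w₁ hw₁d pE (by rw [hw₁0]; exact Sym2.mem_mk_left _ _)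
            (Sym2.mem_mk_right _ _)).2 hσw₁
    · -- y is a K-edge
      obtain ⟨a, b, hab⟩ : ∃ a b, (y : Sym2 (Fin (d+2))) = s(a,b) := by
        induction (y : Sym2 (Fin (d+2))) using Sym2.ind with
        | _ x' y' => exact ⟨x', y', rfl⟩
      have hadj_ab : (dragon d).Adj a b := by have := y.2; rw [hab] at this; exact this
      have hamem : a ∈ (y : Sym2 (Fin (d+2))) := by rw [hab]; exact Sym2.mem_mk_left _ _
      have hbmem : b ∈ (y : Sym2 (Fin (d+2))) := by rw [hab]; exact Sym2.mem_mk_right _ _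
      have ha : a.val ≤ d := by
        by_contra hgt
        have hax : a = vx := Fin.ext (by rw [vx_val]; have := a.2; omega)
        exact hyx (hax ▸ hamem)
      have hb : b.val ≤ d := by
        by_contra hgt
        have hbx : b = vx := Fin.ext (by rw [vx_val]; have := b.2; omega)
        exact hyx (hbx ▸ hbmem)
      obtain ⟨u, hud, hσu⟩ := hσsurj a ha
      obtain ⟨w, hwd, hσw⟩ := hσsurj b hb
      have huw : u ≠ w := by
        intro h
        rw [h, hσw] at hσu
        exact hadj_ab.ne hσu.symm
      have habval := hadj_ab
      rw [adj_low ha hb] at habval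
      have hadj_uw : (dragon d).Adj u w := by
        rw [adj_low hud hwd]
        refine ⟨fun h => huw (Fin.ext h), ?_, ?_⟩
        · rintro ⟨h0, hdd⟩
          have h1 := hval0 u (Or.inl h0)
          have h2 := hval0 w (Or.inr hdd)
          rw [hσu] at h1
          rw [hσw] at h2
          rcases h1 with ⟨h1, -⟩ | ⟨h1, -⟩ <;> rcases h2 with ⟨h2, -⟩ | ⟨h2, -⟩ <;> omega
        · rintro ⟨h0, hdd⟩
          have h1 := hval0 u (Or.inr h0)
          have h2 := hval0 w (Or.inl hdd)
          rw [hσu] at h1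
          rw [hσw] at h2
          rcases h1 with ⟨h1, -⟩ | ⟨h1, -⟩ <;> rcases h2 with ⟨h2, -⟩ | ⟨h2, -⟩ <;> omega
      have hK := K1 u w hud hwd hadj_uw (by rw [hσu, hσw]; exact hadj_ab.ne)
      exact ⟨⟨s(u,w), hadj_uw⟩, Subtype.ext (by rw [hK, hσu, hσw, ← hab])⟩
  · -- σ has a collision : everything maps into one star, contradiction with noD
    exfalso
    push_neg at hinj
    obtain ⟨u, w, hu, hw, hσuw, huw⟩ := hinj
    have huwval : u.val ≠ w.val := fun h => huw (Fin.ext h)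
    have hconst : ∀ t : Fin (d+2), t.val ≤ d → σ t = σ u := by
      have hmid : ∃ t₁ : Fin (d+2), 1 ≤ t₁.val ∧ t₁.val ≤ d - 1 ∧ t₁ ≠ u ∧ t₁ ≠ w := by
        have hex3 : ∃ a : ℕ, 1 ≤ a ∧ a ≤ 3 ∧ a ≠ u.val ∧ a ≠ w.val := by
          by_cases h1 : u.val = 1 ∨ w.val = 1
          · by_cases h2 : u.val = 2 ∨ w.val = 2
            · exact ⟨3, by omega⟩
            · exact ⟨2, by omega⟩
          · exact ⟨1, by omega⟩
        obtain ⟨a, ha1, ha2, ha3, ha4⟩ := hex3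
        exact ⟨⟨a, by omega⟩, by show 1 ≤ a; omega, by show a ≤ d - 1; omega,
          fun h => ha3 (congrArg Fin.val h), fun h => ha4 (congrArg Fin.val h)⟩
      obtain ⟨t₁, ht₁1, ht₁2, ht₁u, ht₁w⟩ := hmid
      have ht₁d : t₁.val ≤ d := by omega
      have hadj_mid : ∀ z : Fin (d+2), z.val ≤ d → z ≠ t₁ → (dragon d).Adj t₁ z := by
        intro z hz hne
        rw [adj_low ht₁d hz]
        exact ⟨fun h => hne (Fin.ext h.symm), by omega, by omega⟩
      have hσt₁ : σ t₁ = σ u :=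
        K2 t₁ u w ht₁d hu hw ht₁u ht₁w huw
          (hadj_mid u hu (fun h => ht₁u h.symm))
          (hadj_mid w hw (fun h => ht₁w h.symm)) hσuw
      intro t ht
      by_cases htu : t = u
      · rw [htu]
      by_cases htw : t = w
      · rw [htw]; exact hσuw.symm
      by_cases htt₁ : t = t₁
      · rw [htt₁]; exact hσt₁
      have hadj_tt₁ : (dragon d).Adj t t₁ := (hadj_mid t ht htt₁).symm
      have htzadj : (dragon d).Adj t u ∨ (dragon d).Adj t w := by
        rw [adj_low ht hu, adj_low ht hw]
        have h1 : t.val ≠ u.val := fun h => htu (Fin.ext h)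
        have h2 : t.val ≠ w.val := fun h => htw (Fin.ext h)
        have h3 : u.val ≠ w.val := fun h => huw (Fin.ext h)
        omega
      rcases htzadj with hz | hz
      · exact K2 t u t₁ ht hu ht₁d htu htt₁ (fun h => ht₁u h.symm) hz hadj_tt₁ hσt₁.symm
      · exact (K2 t w t₁ ht hw ht₁d htw htt₁ (fun h => ht₁w h.symm) hz hadj_tt₁
          (hσuw.symm.trans hσt₁.symm)).trans hσuw.symm
    have hs : (σ u).val ≤ d := hσd u hu
    have hmem : ∀ e : (dragon d).edgeSet, f e ∈ star (σ u) := by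
      intro e
      obtain ⟨v, hv, hve⟩ := exists_low_vertex e
      rw [mem_star_iff]
      have := hσmem v hv e (mem_star_iff.mpr hve)
      rwa [hconst v hv] at this
    have hcard := star_card (σ u) hs hd
    set c : (dragon d).edgeSet → Fin d :=
      fun e => (Finset.equivFinOfCardEq hcard) ⟨f e, hmem e⟩ with hc
    refine noD c ?_ hd
    intro e₁ e₂ hadj heq
    have h' : f e₁ = f e₂ := by
      have := (Finset.equivFinOfCardEq hcard).injective heq
      exact Subtype.mk_eq_mk.mp this
    exact (f.map_adj hadj).ne h'

section ThreeCase

instance dragonRelDec (d u v : ℕ) : Decidable (dragonRel d u v) := by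
  unfold dragonRel; infer_instance

instance dragonAdjDec {d : ℕ} : DecidableRel (dragon d).Adj := fun a b =>
  decidable_of_iff' _ (SimpleGraph.fromRel_adj _ a b)

/-- encoding of the edges of the 3-dragon -/
def enc3 (e : Sym2 (Fin 5)) : ℕ :=
  if e = s(0,1) then 0 else if e = s(0,2) then 1 else if e = s(1,2) then 2
  else if e = s(1,3) then 3 else if e = s(2,3) then 4 else if e = s(0,4) then 5
  else if e = s(3,4) then 6 else 7

/-- color tables: row = removed edge, column = edge -/
def tbl3 (i j : ℕ) : ℕ :=
  ([[0, 0, 1, 0, 2, 2, 1],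
    [0, 0, 1, 2, 0, 2, 1],
    [0, 1, 0, 1, 2, 2, 0],
    [0, 1, 2, 0, 0, 2, 1],
    [0, 1, 2, 1, 0, 2, 0],
    [0, 1, 2, 1, 0, 0, 2],
    [0, 1, 2, 1, 0, 2, 0]].getD i []).getD j 0

/-- the coloring of the edges of the 3-dragon avoiding a removed edge -/
def c3 (v₀ e : Sym2 (Fin 5)) : Fin 3 :=
  ⟨tbl3 (enc3 v₀) (enc3 e) % 3, Nat.mod_lt _ (by omega)⟩

set_option maxRecDepth 4000 in
lemma c3_proper : ∀ u v a b x y : Fin 5,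
    (dragon 3).Adj u v → (dragon 3).Adj a b → (dragon 3).Adj x y →
    s(a,b) ≠ s(x,y) → (a = x ∨ a = y ∨ b = x ∨ b = y) →
    s(a,b) ≠ s(u,v) → s(x,y) ≠ s(u,v) →
    c3 s(u,v) s(a,b) ≠ c3 s(u,v) s(x,y) := by decide

lemma surj_of_three (f : (dragon 3).lineGraph →g (dragon 3).lineGraph) :
    Function.Surjective ⇑f := by
  by_contra hns
  rw [Function.Surjective] at hns
  push_neg at hns
  obtain ⟨v₀, hv₀⟩ := hns
  obtain ⟨u, v, huv⟩ : ∃ u v, (v₀ : Sym2 (Fin 5)) = s(u,v) := by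
    induction (v₀ : Sym2 (Fin 5)) using Sym2.ind with
    | _ x y => exact ⟨x, y, rfl⟩
  have hadj_uv : (dragon 3).Adj u v := by have := v₀.2; rw [huv] at this; exact this
  refine noD (d := 3) (fun e => c3 s(u,v) ((f e) : Sym2 (Fin 5))) ?_ (by omega)
  intro e₁ e₂ hadj heq
  obtain ⟨hne, z, hz1, hz2⟩ := lineGraph_adj_iff_exists.mp (f.map_adj hadj)
  obtain ⟨a, b, hab⟩ : ∃ a b, ((f e₁) : Sym2 (Fin 5)) = s(a,b) := by
    induction ((f e₁) : Sym2 (Fin 5)) using Sym2.ind with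
    | _ x y => exact ⟨x, y, rfl⟩
  obtain ⟨x, y, hxy⟩ : ∃ x y, ((f e₂) : Sym2 (Fin 5)) = s(x,y) := by
    induction ((f e₂) : Sym2 (Fin 5)) using Sym2.ind with
    | _ x y => exact ⟨x, y, rfl⟩
  have hadj_ab : (dragon 3).Adj a b := by have := (f e₁).2; rw [hab] at this; exact this
  have hadj_xy : (dragon 3).Adj x y := by have := (f e₂).2; rw [hxy] at this; exact this
  have hshare : a = x ∨ a = y ∨ b = x ∨ b = y := by
    rw [hab, Sym2.mem_iff] at hz1
    rw [hxy, Sym2.mem_iff] at hz2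
    rcases hz1 with rfl | rfl <;> rcases hz2 with h | h <;> tauto
  have h1 : s(a,b) ≠ s(x,y) := by
    rw [← hab, ← hxy]; exact fun h => hne (Subtype.ext h)
  have h2 : s(a,b) ≠ s(u,v) := by
    rw [← hab, ← huv]; exact fun h => hv₀ e₁ (Subtype.ext h)
  have h3 : s(x,y) ≠ s(u,v) := by
    rw [← hxy, ← huv]; exact fun h => hv₀ e₂ (Subtype.ext h)
  have hprop := c3_proper u v a b x y hadj_uv hadj_ab hadj_xy h1 hshare h2 h3
  exact hprop (by rw [← hab, ← hxy]; exact heq)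

end ThreeCase

lemma iso_of_surjective {W : Type*} [Fintype W] [DecidableEq W] {G : SimpleGraph W}
    (f : G →g G) (hf : Function.Surjective ⇑f) :
    ∃ e : G ≃g G, ∀ x, e x = f x := by
  have hinj : Function.Injective ⇑f := Finite.injective_iff_surjective.mpr hf
  have hfinE : Finite ↥G.edgeSet := (Set.toFinite G.edgeSet).to_subtype
  have hedgeinj : Function.Injective f.mapEdgeSet := Hom.mapEdgeSet.injective f hinj
  have hedgesurj : Function.Surjective f.mapEdgeSet :=
    Finite.injective_iff_surjective.mp hedgeinj
  have hrefl : ∀ a b : W, G.Adj (f a) (f b) → G.Adj a b := by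
    intro a b hab
    obtain ⟨⟨e, he⟩, heq⟩ := hedgesurj ⟨s(f a, f b), hab⟩
    obtain ⟨x, y, rfl⟩ : ∃ x y, e = s(x,y) := by
      induction e using Sym2.ind with
      | _ x y => exact ⟨x, y, rfl⟩
    have h2 : Sym2.map f s(x,y) = s(f a, f b) := congrArg Subtype.val heq
    rw [Sym2.map_pair_eq, Sym2.eq_iff] at h2
    rw [SimpleGraph.mem_edgeSet] at he
    rcases h2 with ⟨hx, hy⟩ | ⟨hx, hy⟩
    · rwa [hinj hx, hinj hy] at he
    · rw [hinj hx, hinj hy] at he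
      exact he.symm
  exact ⟨⟨Equiv.ofBijective ⇑f ⟨hinj, hf⟩, @fun a b => ⟨hrefl a b, fun h => f.map_adj h⟩⟩,
    fun x => rfl⟩

end DragonCore

open DragonCore

/-- **Line graphs of dragons are cores.** For every `d ≥ 3`, every graph homomorphism
from `L(D_d)` to itself is a graph isomorphism. -/
theorem dragon_lineGraph_is_core (d : ℕ) (hd : 3 ≤ d)
    (f : (dragon d).lineGraph →g (dragon d).lineGraph) :
    ∃ e : (dragon d).lineGraph ≃g (dragon d).lineGraph, ∀ x, e x = f x := by
  have hsurj : Function.Surjective ⇑f := by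
    rcases Nat.lt_or_ge d 4 with h4 | h4
    · have h3 : d = 3 := by omega
      subst h3
      exact surj_of_three f
    · exact surj_of_four h4 f
  exact iso_of_surjective f hsurj
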